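/- Let d ≥ 1 and let (g_n) be a sequence in GL(d,ℝ). Then there exist a strictly increasing map φ : ℕ → ℕ, an integer m ≥ 1, linear subspaces ℝ^d = W_0 ⊋ W_1 ⊋ ⋯ ⊋ W_m = {0}, and linear maps h_0, …, h_{m−1} : ℝ^d → ℝ^d such that for each j < m one has W_{j+1} = W_j ∩ ker(h_j), and for every vector v ∈ W_j ∖ W_{j+1} the sequence of points [g_{φ(k)} v] converges in ℙ^{d−1}(ℝ) to [h_j v] as k → ∞ (note h_j v ≠ 0 since v ∉ ker h_j). -/

import Mathlib

open Filter Matrix Topology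

/-- Real projective space `ℙ^{d-1}(ℝ)`, as the projectivization of `ℝ^d`, carries the
quotient topology coming from `ℝ^d ∖ {0}`. -/
noncomputable instance projectivizationTopology (d : ℕ) :
    TopologicalSpace (Projectivization ℝ (Fin d → ℝ)) :=
  instTopologicalSpaceQuotient

lemma tendsto_projectivization_mk {d : ℕ} {u : ℕ → (Fin d → ℝ)} {l : Fin d → ℝ}
    (hu : ∀ k, u k ≠ 0) (hl : l ≠ 0) (h : Tendsto u atTop (𝓝 l)) :
    Tendsto (fun k => Projectivization.mk ℝ (u k) (hu k)) atTop
      (𝓝 (Projectivization.mk ℝ l hl)) := by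
  have hsub : Tendsto (fun k => (⟨u k, hu k⟩ : {v : Fin d → ℝ // v ≠ 0})) atTop
      (𝓝 ⟨l, hl⟩) := by
    rw [tendsto_subtype_rng]; exact h
  exact (continuous_quotient_mk'.tendsto _).comp hsub

set_option maxHeartbeats 1000000 in
lemma key (d : ℕ) : ∀ N : ℕ, ∀ W : Submodule ℝ (Fin d → ℝ),
    Module.finrank ℝ W ≤ N → W ≠ ⊥ →
    ∀ g : ℕ → Matrix.GeneralLinearGroup (Fin d) ℝ,
    ∃ φ : ℕ → ℕ, StrictMono φ ∧
    ∃ m : ℕ, 1 ≤ m ∧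
    ∃ (W' : ℕ → Submodule ℝ (Fin d → ℝ)) (h : ℕ → ((Fin d → ℝ) →ₗ[ℝ] (Fin d → ℝ))),
      W' 0 = W ∧ W' m = ⊥ ∧
      (∀ j, j < m → W' (j + 1) < W' j) ∧
      (∀ j, j < m → W' (j + 1) = W' j ⊓ LinearMap.ker (h j)) ∧
      (∀ j, j < m → ∀ v ∈ W' j, v ∉ W' (j + 1) →
        ∃ (hgv : ∀ k : ℕ, ((g (φ k) : Matrix (Fin d) (Fin d) ℝ)) *ᵥ v ≠ 0)
          (hhv : h j v ≠ 0),
          Tendsto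
            (fun k : ℕ =>
              Projectivization.mk ℝ (((g (φ k) : Matrix (Fin d) (Fin d) ℝ)) *ᵥ v) (hgv k))
            atTop (𝓝 (Projectivization.mk ℝ (h j v) hhv))) := by
  intro N
  induction N with
  | zero =>
    intro W hrk hne g
    exact absurd (Submodule.finrank_eq_zero.mp (Nat.le_zero.mp hrk)) hne
  | succ N ih =>
    intro W hrk hne g
    have hg0 : ∀ (n : ℕ) (v : Fin d → ℝ), v ≠ 0 →
        (g n : Matrix (Fin d) (Fin d) ℝ) *ᵥ v ≠ 0 := by
      intro n v hv hc
      apply hv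
      have h1 : ((g n)⁻¹.1 * (g n).1) *ᵥ v = v := by
        rw [Units.inv_mul, Matrix.one_mulVec]
      rw [← h1, ← Matrix.mulVec_mulVec, hc, Matrix.mulVec_zero]
    -- projection onto W
    obtain ⟨Wc, hcompl⟩ := Submodule.exists_isCompl W
    set π : (Fin d → ℝ) →ₗ[ℝ] (Fin d → ℝ) :=
      W.subtype.comp (Submodule.linearProjOfIsCompl W Wc hcompl) with hπ
    have hπW : ∀ v ∈ W, π v = v := by
      intro v hv
      have : Submodule.linearProjOfIsCompl W Wc hcompl v = ⟨v, hv⟩ :=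
        Submodule.linearProjOfIsCompl_apply_left hcompl ⟨v, hv⟩
      simp [hπ, LinearMap.comp_apply, this]
    have hπmem : ∀ v, π v ∈ W := fun v => (Submodule.linearProjOfIsCompl W Wc hcompl v).2
    -- B n = g n ∘ π as a continuous linear map
    set B : ℕ → ((Fin d → ℝ) →L[ℝ] (Fin d → ℝ)) := fun n =>
      LinearMap.toContinuousLinearMap
        ((Matrix.mulVecLin (g n : Matrix (Fin d) (Fin d) ℝ)).comp π) with hB
    have hB_apply : ∀ n v, B n v = (g n : Matrix (Fin d) (Fin d) ℝ) *ᵥ (π v) := fun n v => rfl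
    obtain ⟨v₀, hv₀W, hv₀⟩ := Submodule.exists_mem_ne_zero_of_ne_bot hne
    have hc0 : ∀ n, ‖B n‖ ≠ 0 := by
      intro n hn
      have hz : B n = 0 := norm_eq_zero.mp hn
      have h2 : B n v₀ = 0 := by rw [hz]; rfl
      rw [hB_apply, hπW v₀ hv₀W] at h2
      exact hg0 n v₀ hv₀ h2
    set F : ℕ → ((Fin d → ℝ) →L[ℝ] (Fin d → ℝ)) := fun n => ‖B n‖⁻¹ • B n with hF
    have hFnorm : ∀ n, ‖F n‖ = 1 := by
      intro n
      show ‖‖B n‖⁻¹ • B n‖ = 1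
      exact (norm_smul (‖B n‖⁻¹) (B n)).trans
        (by rw [norm_inv, norm_norm]; exact inv_mul_cancel₀ (hc0 n))
    have hball : ∀ n, F n ∈ Metric.closedBall (0 : (Fin d → ℝ) →L[ℝ] (Fin d → ℝ)) 1 :=
      fun n => mem_closedBall_zero_iff.mpr (hFnorm n).le
    obtain ⟨Finf, -, φ, hφ, hFtend⟩ :=
      (isCompact_closedBall (0 : (Fin d → ℝ) →L[ℝ] (Fin d → ℝ)) 1).tendsto_subseq hball
    have hFinfnorm : ‖Finf‖ = 1 := by
      have h1 : Tendsto (fun k => ‖F (φ k)‖) atTop (𝓝 ‖Finf‖) := hFtend.norm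
      have h2 : Tendsto (fun k => ‖F (φ k)‖) atTop (𝓝 1) := by
        simpa [hFnorm] using tendsto_const_nhds (x := (1:ℝ)) (f := (atTop : Filter ℕ))
      exact tendsto_nhds_unique h1 h2
    set h0 : (Fin d → ℝ) →ₗ[ℝ] (Fin d → ℝ) := (Finf : (Fin d → ℝ) →ₗ[ℝ] (Fin d → ℝ)) with hh0
    set W1 : Submodule ℝ (Fin d → ℝ) := W ⊓ LinearMap.ker h0 with hW1
    -- main convergence claim
    have claim : ∀ v, ∀ hv : v ∈ W, v ∉ W1 →
        ∃ (hgv : ∀ k : ℕ, ((g (φ k) : Matrix (Fin d) (Fin d) ℝ)) *ᵥ v ≠ 0)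
          (hhv : h0 v ≠ 0),
          Tendsto
            (fun k : ℕ =>
              Projectivization.mk ℝ (((g (φ k) : Matrix (Fin d) (Fin d) ℝ)) *ᵥ v) (hgv k))
            atTop (𝓝 (Projectivization.mk ℝ (h0 v) hhv)) := by
      intro v hv hv1
      have hhv : h0 v ≠ 0 := fun hz =>
        hv1 (Submodule.mem_inf.mpr ⟨hv, LinearMap.mem_ker.mpr hz⟩)
      have hvne : v ≠ 0 := by
        intro h'; apply hhv; rw [h']; simp
      have hgv : ∀ k : ℕ, ((g (φ k) : Matrix (Fin d) (Fin d) ℝ)) *ᵥ v ≠ 0 :=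
        fun k => hg0 (φ k) v hvne
      refine ⟨hgv, hhv, ?_⟩
      have hFval : ∀ k, F (φ k) v = ‖B (φ k)‖⁻¹ • ((g (φ k) : Matrix (Fin d) (Fin d) ℝ) *ᵥ v) := by
        intro k
        show ‖B (φ k)‖⁻¹ • (B (φ k) v) = _
        rw [hB_apply, hπW v hv]
      have hune : ∀ k, F (φ k) v ≠ 0 := by
        intro k
        rw [hFval k]
        exact smul_ne_zero (inv_ne_zero (hc0 _)) (hgv k)
      have hltend : Tendsto (fun k => F (φ k) v) atTop (𝓝 (Finf v)) :=
        ((ContinuousLinearMap.apply ℝ (Fin d → ℝ) v).continuous.tendsto Finf).comp hFtend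
      have hlim_ne : Finf v ≠ 0 := hhv
      have main := tendsto_projectivization_mk hune hlim_ne hltend
      have heq : (fun k : ℕ =>
          Projectivization.mk ℝ (((g (φ k) : Matrix (Fin d) (Fin d) ℝ)) *ᵥ v) (hgv k)) =
          fun k => Projectivization.mk ℝ (F (φ k) v) (hune k) := by
        funext k
        rw [Projectivization.mk_eq_mk_iff]
        refine ⟨Units.mk0 ‖B (φ k)‖ (hc0 _), ?_⟩
        rw [hFval k]
        simp [Units.smul_def, smul_smul, mul_inv_cancel₀ (hc0 _)]
      rw [heq]
      exact main
    -- W1 < W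
    have hFne : ∃ w, w ∈ W ∧ h0 w ≠ 0 := by
      by_contra hall
      push_neg at hall
      have hzero : Finf = 0 := by
        -- Finf ∘ π = Finf, and Finf vanishes on W
        have hcomp : ∀ k, (F (φ k)).comp (LinearMap.toContinuousLinearMap π) = F (φ k) := by
          intro k
          refine ContinuousLinearMap.ext fun w => ?_
          show F (φ k) (π w) = F (φ k) w
          have : B (φ k) (π w) = B (φ k) w := by
            rw [hB_apply, hB_apply, hπW (π w) (hπmem w)]
          show ‖B (φ k)‖⁻¹ • (B (φ k) (π w)) = ‖B (φ k)‖⁻¹ • (B (φ k) w)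
          rw [this]
        have hcont : Tendsto (fun k => (F (φ k)).comp (LinearMap.toContinuousLinearMap π))
            atTop (𝓝 (Finf.comp (LinearMap.toContinuousLinearMap π))) := by
          have : Continuous fun G : (Fin d → ℝ) →L[ℝ] (Fin d → ℝ) =>
              G.comp (LinearMap.toContinuousLinearMap π) :=
            (ContinuousLinearMap.compL ℝ (Fin d → ℝ) (Fin d → ℝ) (Fin d → ℝ)).continuous₂.comp
              (continuous_id.prodMk continuous_const) |>.congr (fun _ => rfl)
          exact (this.tendsto Finf).comp hFtend
        have h2 : Finf.comp (LinearMap.toContinuousLinearMap π) = Finf := by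
          refine tendsto_nhds_unique hcont ?_
          simpa [hcomp, Function.comp_def] using hFtend
        refine ContinuousLinearMap.ext fun w => ?_
        have e3 : Finf (π w) = Finf w := by
          conv_rhs => rw [← h2]
          rfl
        rw [ContinuousLinearMap.zero_apply, ← e3]
        exact hall (π w) (hπmem w)
      rw [hzero] at hFinfnorm
      simp at hFinfnorm
    obtain ⟨w, hwW, hw⟩ := hFne
    have hwW1 : w ∉ W1 := by
      intro hmem
      exact hw (LinearMap.mem_ker.mp (Submodule.mem_inf.mp hmem).2)
    have hlt : W1 < W := lt_of_le_of_ne inf_le_left (fun h => hwW1 (h ▸ hwW))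
    by_cases hW1bot : W1 = ⊥
    · refine ⟨φ, hφ, 1, le_refl 1, (fun j => Nat.casesOn j W fun _ => ⊥), fun _ => h0,
        rfl, rfl, ?_, ?_, ?_⟩
      · intro j hj
        have hj0 : j = 0 := by omega
        subst hj0
        show (⊥ : Submodule ℝ (Fin d → ℝ)) < W
        rw [← hW1bot]; exact hlt
      · intro j hj
        have hj0 : j = 0 := by omega
        subst hj0
        show (⊥ : Submodule ℝ (Fin d → ℝ)) = W ⊓ LinearMap.ker h0
        rw [← hW1bot]
      · intro j hj v hvW hvnW
        have hj0 : j = 0 := by omega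
        subst hj0
        exact claim v hvW (by rw [hW1bot]; exact hvnW)
    · have hrk1 : Module.finrank ℝ W1 ≤ N := by
        have h1 := Submodule.finrank_lt_finrank_of_lt hlt
        have h2 : Module.finrank ℝ W ≤ N + 1 := hrk
        omega
      obtain ⟨φ', hφ', m', hm', W₂, h₂, hW₂0, hW₂m, hW₂lt, hW₂ker, hW₂conv⟩ :=
        ih W1 hrk1 hW1bot (fun n => g (φ n))
      refine ⟨φ ∘ φ', hφ.comp hφ', m' + 1, Nat.le_add_left 1 m',
        (fun j => Nat.casesOn j W W₂), (fun j => Nat.casesOn j h0 h₂), rfl, hW₂m, ?_, ?_, ?_⟩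
      · intro j hj
        cases j with
        | zero =>
          show W₂ 0 < W
          rw [hW₂0]; exact hlt
        | succ i => exact hW₂lt i (by omega)
      · intro j hj
        cases j with
        | zero =>
          show W₂ 0 = W ⊓ LinearMap.ker h0
          rw [hW₂0]
        | succ i => exact hW₂ker i (by omega)
      · intro j hj v hvW hvnW
        cases j with
        | zero =>
          have hvnW1 : v ∉ W1 := by
            intro hmem
            exact hvnW (by show v ∈ W₂ 0; rw [hW₂0]; exact hmem)
          obtain ⟨hgv, hhv, htend⟩ := claim v hvW hvnW1
          exact ⟨fun k => hgv (φ' k), hhv, htend.comp hφ'.tendsto_atTop⟩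
        | succ i =>
          exact hW₂conv i (by omega) v hvW hvnW


/-- Given a sequence `(g_n)` in `GL(d,ℝ)`, there is a subsequence `g_{φ(k)}`, a filtration
`ℝ^d = W_0 ⊋ W_1 ⊋ ⋯ ⊋ W_m = {0}` and linear maps `h_0, …, h_{m-1}` such that
`W_{j+1} = W_j ∩ ker h_j` and for every `v ∈ W_j ∖ W_{j+1}` the points `[g_{φ(k)} v]`
converge to `[h_j v]` in projective space. -/
theorem furstenberg_filtration (d : ℕ) (hd : 1 ≤ d)
    (g : ℕ → Matrix.GeneralLinearGroup (Fin d) ℝ) :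
    ∃ φ : ℕ → ℕ, StrictMono φ ∧
    ∃ m : ℕ, 1 ≤ m ∧
    ∃ (W : ℕ → Submodule ℝ (Fin d → ℝ)) (h : ℕ → ((Fin d → ℝ) →ₗ[ℝ] (Fin d → ℝ))),
      W 0 = ⊤ ∧ W m = ⊥ ∧
      (∀ j, j < m → W (j + 1) < W j) ∧
      (∀ j, j < m → W (j + 1) = W j ⊓ LinearMap.ker (h j)) ∧
      (∀ j, j < m → ∀ v ∈ W j, v ∉ W (j + 1) →
        ∃ (hgv : ∀ k : ℕ, ((g (φ k) : Matrix (Fin d) (Fin d) ℝ)) *ᵥ v ≠ 0)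
          (hhv : h j v ≠ 0),
          Tendsto
            (fun k : ℕ =>
              Projectivization.mk ℝ (((g (φ k) : Matrix (Fin d) (Fin d) ℝ)) *ᵥ v) (hgv k))
            atTop (𝓝 (Projectivization.mk ℝ (h j v) hhv))) := by
  haveI : Nonempty (Fin d) := ⟨⟨0, hd⟩⟩
  haveI : Nontrivial (Fin d → ℝ) := by infer_instance
  have htop : (⊤ : Submodule ℝ (Fin d → ℝ)) ≠ ⊥ := bot_lt_top.ne'
  exact key d (Module.finrank ℝ (⊤ : Submodule ℝ (Fin d → ℝ))) ⊤ le_rfl htop g
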